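/- Let K > 5 be an integer and M ≥ 1 a real number. For each l ∈ {1,…,K}, let p^{(l)} be a probability distribution on {1,…,K} (with indices taken cyclically modulo K), and suppose that p^{(l)}(i) ≤ M·p^{(l')}(i) for all l, l', i ∈ {1,…,K}. Then ∑_{l=1}^{K} (1 − p^{(l)}({l−1, l, l+1})) ≥ K·(K−5)/(3M + K − 5). -/

import Mathlib

open Finset

/-- The counting step in the privacy lower bound. Actions are indexed by `{0, ..., K-1}` with
cyclic indices (modulo `K`): if `K > 5` probability distributions `p l` on `{0, ..., K-1}` are
pairwise multiplicatively `M`-close, then the total probability of missing the three indices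
`{l-1, l, l+1}` is at least `K(K-5)/(3M + K - 5)`. -/
theorem privacy_lower_bound_counting (K : ℕ) (hK : 5 < K) (M : ℝ) (hM : 1 ≤ M)
    (p : ℕ → ℕ → ℝ)
    (hnn : ∀ l i, l < K → i < K → 0 ≤ p l i)
    (hsum : ∀ l, l < K → ∑ i ∈ Finset.range K, p l i = 1)
    (hclose : ∀ l l' i, l < K → l' < K → i < K → p l i ≤ M * p l' i) :
    ∑ l ∈ Finset.range K, (1 - (p l ((l + K - 1) % K) + p l l + p l ((l + 1) % K))) ≥
      (K : ℝ) * ((K : ℝ) - 5) / (3 * M + (K : ℝ) - 5) := by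
  have hK0 : 0 < K := by omega
  set S : ℕ → Finset ℕ := fun i => {(i + K - 1) % K, i, (i + 1) % K} with hSdef
  have hlt1 : ∀ a : ℕ, (a + 1) % K < K := fun a => Nat.mod_lt _ hK0
  have hlt2 : ∀ a : ℕ, (a + K - 1) % K < K := fun a => Nat.mod_lt _ hK0
  have e1 : ∀ x : ℕ, x + K - 1 = x + (K - 1) := fun x => by omega
  have hinv1 : ∀ a, a < K → ((a + 1) % K + K - 1) % K = a := by
    intro a ha
    rw [e1 ((a + 1) % K), Nat.mod_add_mod,
      show a + 1 + (K - 1) = a + K from by omega, Nat.add_mod_right, Nat.mod_eq_of_lt ha]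
  have hinv2 : ∀ a, a < K → ((a + K - 1) % K + 1) % K = a := by
    intro a ha
    rw [e1 a, Nat.mod_add_mod,
      show a + (K - 1) + 1 = a + K from by omega, Nat.add_mod_right, Nat.mod_eq_of_lt ha]
  have hiff1 : ∀ a b, a < K → b < K → (b = (a + K - 1) % K ↔ a = (b + 1) % K) := by
    intro a b ha hb
    constructor
    · rintro rfl; rw [hinv2 a ha]
    · rintro rfl; rw [hinv1 b hb]
  have hmem_symm : ∀ a b, a < K → b < K → (b ∈ S a ↔ a ∈ S b) := by
    intro a b ha hb
    simp only [hSdef, mem_insert, mem_singleton]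
    rw [hiff1 a b ha hb, show (b = a ↔ a = b) from eq_comm,
      show (b = (a + 1) % K ↔ a = (b + K - 1) % K) from (hiff1 b a hb ha).symm]
    tauto
  have hne_a1 : ∀ a, a < K → (a + 1) % K ≠ a := by
    intro a ha h
    rcases Nat.lt_or_ge (a + 1) K with h1 | h1
    · rw [Nat.mod_eq_of_lt h1] at h; omega
    · have h2 : a + 1 = K := by omega
      rw [h2, Nat.mod_self] at h; omega
  have hne_a2 : ∀ a, a < K → (a + K - 1) % K ≠ a := by
    intro a ha h
    rcases Nat.eq_zero_or_pos a with h0 | h0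
    · subst h0
      rw [show 0 + K - 1 = K - 1 from by omega, Nat.mod_eq_of_lt (by omega)] at h
      omega
    · rw [show a + K - 1 = K + (a - 1) from by omega, Nat.add_mod_left,
        Nat.mod_eq_of_lt (by omega)] at h
      omega
  have hne_12 : ∀ a, a < K → (a + K - 1) % K ≠ (a + 1) % K := by
    intro a ha h
    have h2 := hinv2 a ha
    rw [h, Nat.mod_add_mod] at h2
    have h3 : (a + 2) % K = a := by rwa [show a + 2 = a + 1 + 1 from rfl]
    rcases Nat.lt_or_ge (a + 2) K with h4 | h4
    · rw [Nat.mod_eq_of_lt h4] at h3; omega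
    · have h5 : a + 2 - K < K := by omega
      have h6 : (a + 2) % K = a + 2 - K := by
        rw [Nat.mod_eq_sub_mod h4, Nat.mod_eq_of_lt h5]
      omega
  have hnm1 : ∀ a, a < K → a ∉ ({(a + 1) % K} : Finset ℕ) := by
    intro a ha
    simp only [mem_singleton]
    exact fun h => hne_a1 a ha h.symm
  have hnm2 : ∀ a, a < K → (a + K - 1) % K ∉ ({a, (a + 1) % K} : Finset ℕ) := by
    intro a ha
    simp only [mem_insert, mem_singleton]
    push_neg
    exact ⟨hne_a2 a ha, hne_12 a ha⟩
  have hSsub : ∀ a, a < K → S a ⊆ Finset.range K := by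
    intro a ha x hx
    simp only [hSdef, mem_insert, mem_singleton] at hx
    rcases hx with rfl | rfl | rfl
    · exact mem_range.mpr (hlt2 a)
    · exact mem_range.mpr ha
    · exact mem_range.mpr (hlt1 a)
  have hScard : ∀ a, a < K → (S a).card = 3 := by
    intro a ha
    simp only [hSdef]
    rw [Finset.card_insert_of_notMem (hnm2 a ha), Finset.card_insert_of_notMem (hnm1 a ha),
      Finset.card_singleton]
  set q : ℕ → ℝ := fun l => ∑ i ∈ S l, p l i with hqdef
  have hq : ∀ l, l < K → q l = p l ((l + K - 1) % K) + p l l + p l ((l + 1) % K) := by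
    intro l hl
    simp only [hqdef, hSdef]
    rw [Finset.sum_insert (hnm2 l hl), Finset.sum_insert (hnm1 l hl), Finset.sum_singleton]
    ring
  -- general double-counting swap
  have hswap : ∀ F : ℕ → ℕ → ℝ,
      ∑ l ∈ Finset.range K, ∑ i ∈ S l, F l i = ∑ i ∈ Finset.range K, ∑ l ∈ S i, F l i := by
    intro F
    calc ∑ l ∈ Finset.range K, ∑ i ∈ S l, F l i
        = ∑ l ∈ Finset.range K, ∑ i ∈ Finset.range K, if i ∈ S l then F l i else 0 := by
          refine Finset.sum_congr rfl fun l hl => ?_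
          rw [Finset.sum_ite_mem, Finset.inter_eq_right.mpr (hSsub l (mem_range.mp hl))]
      _ = ∑ i ∈ Finset.range K, ∑ l ∈ Finset.range K, if i ∈ S l then F l i else 0 :=
          Finset.sum_comm
      _ = ∑ i ∈ Finset.range K, ∑ l ∈ Finset.range K, if l ∈ S i then F l i else 0 := by
          refine Finset.sum_congr rfl fun i hi => Finset.sum_congr rfl fun l hl => ?_
          exact if_congr (hmem_symm l i (mem_range.mp hl) (mem_range.mp hi)) rfl rfl
      _ = ∑ i ∈ Finset.range K, ∑ l ∈ S i, F l i := by
          refine Finset.sum_congr rfl fun i hi => ?_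
          rw [Finset.sum_ite_mem, Finset.inter_eq_right.mpr (hSsub i (mem_range.mp hi))]
  -- inner sums over complements
  have hcomp : ∀ l, l < K → ∑ i ∈ Finset.range K \ S l, p l i = 1 - q l := by
    intro l hl
    rw [Finset.sum_sdiff_eq_sub (hSsub l hl), hsum l hl]
  have hC : ∑ i ∈ Finset.range K, ∑ l' ∈ Finset.range K \ S i, p l' i
      = ∑ l' ∈ Finset.range K, (1 - q l') := by
    calc ∑ i ∈ Finset.range K, ∑ l' ∈ Finset.range K \ S i, p l' i
        = ∑ i ∈ Finset.range K, ((∑ l' ∈ Finset.range K, p l' i) - ∑ l' ∈ S i, p l' i) := by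
          refine Finset.sum_congr rfl fun i hi => ?_
          rw [Finset.sum_sdiff_eq_sub (hSsub i (mem_range.mp hi))]
      _ = (∑ i ∈ Finset.range K, ∑ l' ∈ Finset.range K, p l' i)
            - ∑ i ∈ Finset.range K, ∑ l' ∈ S i, p l' i := Finset.sum_sub_distrib _ _
      _ = (∑ l' ∈ Finset.range K, ∑ i ∈ Finset.range K, p l' i)
            - ∑ l' ∈ Finset.range K, ∑ i ∈ S l', p l' i := by
          rw [Finset.sum_comm, hswap (fun l i => p l i)]
      _ = ∑ l' ∈ Finset.range K, (1 - q l') := by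
          rw [← Finset.sum_sub_distrib]
          refine Finset.sum_congr rfl fun l' hl' => ?_
          rw [hsum l' (mem_range.mp hl')]
  -- key inequality : (K-3) * ∑ q ≤ 3M * ∑ (1 - q)
  have key : ((K : ℝ) - 3) * ∑ l ∈ Finset.range K, q l
      ≤ 3 * M * ∑ l ∈ Finset.range K, (1 - q l) := by
    have step1 : ((K : ℝ) - 3) * ∑ l ∈ Finset.range K, q l
        ≤ ∑ l ∈ Finset.range K, ∑ i ∈ S l, (M * ∑ l' ∈ Finset.range K \ S i, p l' i) := by
      rw [Finset.mul_sum]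
      refine Finset.sum_le_sum fun l hl => ?_
      have hlK := mem_range.mp hl
      simp only [hqdef]
      rw [Finset.mul_sum]
      refine Finset.sum_le_sum fun i hi => ?_
      have hiK : i < K := mem_range.mp (hSsub l hlK hi)
      have hcard' : (Finset.range K \ S i).card = K - 3 := by
        rw [Finset.card_sdiff_of_subset (hSsub i hiK), Finset.card_range, hScard i hiK]
      have heq : ((K : ℝ) - 3) * p l i = ∑ _l' ∈ Finset.range K \ S i, p l i := by
        rw [Finset.sum_const, hcard', nsmul_eq_mul, Nat.cast_sub (by omega : 3 ≤ K)]
        norm_num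
      rw [heq, Finset.mul_sum]
      refine Finset.sum_le_sum fun l' hl' => ?_
      have hl'K : l' < K := mem_range.mp (Finset.mem_sdiff.mp hl').1
      exact hclose l l' i hlK hl'K hiK
    have step2 : ∑ l ∈ Finset.range K, ∑ i ∈ S l, (M * ∑ l' ∈ Finset.range K \ S i, p l' i)
        = 3 * M * ∑ l ∈ Finset.range K, (1 - q l) := by
      rw [hswap (fun _ i => M * ∑ l' ∈ Finset.range K \ S i, p l' i)]
      calc ∑ i ∈ Finset.range K, ∑ _l ∈ S i, (M * ∑ l' ∈ Finset.range K \ S i, p l' i)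
          = ∑ i ∈ Finset.range K, (3 * (M * ∑ l' ∈ Finset.range K \ S i, p l' i)) := by
            refine Finset.sum_congr rfl fun i hi => ?_
            rw [Finset.sum_const, hScard i (mem_range.mp hi), nsmul_eq_mul]
            norm_num
        _ = 3 * M * ∑ i ∈ Finset.range K, ∑ l' ∈ Finset.range K \ S i, p l' i := by
            rw [Finset.mul_sum]
            exact Finset.sum_congr rfl fun i hi => by ring
        _ = 3 * M * ∑ l ∈ Finset.range K, (1 - q l) := by rw [hC]
    exact step1.trans_eq step2
  -- wrap up
  have hT0 : 0 ≤ ∑ l ∈ Finset.range K, q l := by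
    refine Finset.sum_nonneg fun l hl => Finset.sum_nonneg fun i hi => ?_
    exact hnn l i (mem_range.mp hl) (mem_range.mp (hSsub l (mem_range.mp hl) hi))
  have hU : ∑ l ∈ Finset.range K, (1 - q l) = (K : ℝ) - ∑ l ∈ Finset.range K, q l := by
    rw [Finset.sum_sub_distrib, Finset.sum_const, Finset.card_range, nsmul_eq_mul, mul_one]
  have hgoal_eq : ∑ l ∈ Finset.range K,
      (1 - (p l ((l + K - 1) % K) + p l l + p l ((l + 1) % K)))
      = ∑ l ∈ Finset.range K, (1 - q l) :=
    Finset.sum_congr rfl fun l hl => by rw [hq l (mem_range.mp hl)]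
  have hK6 : (6 : ℝ) ≤ (K : ℝ) := by exact_mod_cast hK
  have hden : (0 : ℝ) < 3 * M + (K : ℝ) - 5 := by linarith
  rw [hgoal_eq, ge_iff_le, div_le_iff₀ hden, hU]
  rw [hU] at key
  nlinarith [key, hT0, hK6]
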